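/- For every integer k ≥ 0, with λ_j = cos(jπ/(k+2)) and α² = Σ_{j=1}^{k+1} sin²(jπ/(k+2)), one has the identity (1/(2α²)) · Σ_{j=1}^{k+1} h(j) · sin²(jπ/(k+2))/(1 - λ_j) = (2k+3)/(2k+4), where h(j) = 3/2 if j is odd and h(j) = 1/2 if j is even. -/

import Mathlib

open Real Finset

private lemma cos_nat_pi (m : ℕ) : Real.cos (m * π) = (-1 : ℝ)^m := by
  induction m with
  | zero => simp
  | succ j ih =>
    push_cast
    rw [add_mul, one_mul, Real.cos_add_pi, ih, pow_succ]
    ring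

private lemma tele (φ : ℝ) (m : ℕ) :
    Real.sin (φ/2) * ∑ j ∈ Icc 1 m, Real.cos ((j : ℝ) * φ)
      = (Real.sin (((m:ℝ) + 1/2) * φ) - Real.sin (φ/2)) / 2 := by
  induction m with
  | zero =>
    rw [show ((0:ℕ):ℝ) + 1/2 = 1/2 by norm_num]
    simp
    ring_nf
  | succ m ih =>
    rw [Finset.sum_Icc_succ_top (by omega : 1 ≤ m + 1)]
    push_cast
    rw [show ((m:ℝ)+1+1/2)*φ = ((m:ℝ)+1)*φ + φ/2 by ring, Real.sin_add]
    rw [show ((m:ℝ)+1/2)*φ = ((m:ℝ)+1)*φ - φ/2 by ring, Real.sin_sub] at ih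
    linear_combination ih

private lemma alt_sum (m : ℕ) : ∑ j ∈ Icc 1 m, ((-1:ℝ))^j = ((-1:ℝ)^m - 1)/2 := by
  induction m with
  | zero => simp
  | succ m ih =>
    rw [Finset.sum_Icc_succ_top (by omega : 1 ≤ m + 1), ih, pow_succ]
    ring

theorem stmt_13 (k : ℕ) :
    (1 / (2 * ∑ j ∈ Finset.Icc 1 (k + 1), Real.sin ((j : ℝ) * π / (k + 2)) ^ 2)) *
      ∑ j ∈ Finset.Icc 1 (k + 1),
        (if Odd j then (3 : ℝ) / 2 else 1 / 2) *
          Real.sin ((j : ℝ) * π / (k + 2)) ^ 2 / (1 - Real.cos ((j : ℝ) * π / (k + 2))) =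
    (2 * (k : ℝ) + 3) / (2 * (k : ℝ) + 4) := by
  set N : ℝ := (k : ℝ) + 2 with hNdef
  have hN0 : (0:ℝ) < N := by positivity
  have hNk : (k:ℝ) + 1 < N := by simp [hNdef]
  have hhalf : 0 < (π/N)/2 := by positivity
  have hhalf' : (π/N)/2 < π/2 := by
    rw [div_lt_div_iff₀ (by norm_num) (by norm_num)]
    have : π / N < π := by
      rw [div_lt_iff₀ hN0]
      nlinarith [pi_pos]
    nlinarith [pi_pos, this]
  have hsinhalf : Real.sin ((π/N)/2) ≠ 0 :=
    ne_of_gt (Real.sin_pos_of_pos_of_lt_pi hhalf (by linarith [pi_pos]))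
  have hcoshalf : Real.cos ((π/N)/2) ≠ 0 :=
    ne_of_gt (Real.cos_pos_of_mem_Ioo ⟨by linarith [pi_pos], hhalf'⟩)
  have hsinN : Real.sin (π/N) ≠ 0 := by
    refine ne_of_gt (Real.sin_pos_of_pos_of_lt_pi (by positivity) ?_)
    rw [div_lt_iff₀ hN0]; nlinarith [pi_pos]
  -- C0 = 0
  have hC0 : ∑ j ∈ Icc 1 (k+1), Real.cos ((j:ℝ) * (π/N)) = 0 := by
    have h := tele (π/N) (k+1)
    rw [show (((k+1:ℕ)):ℝ) + 1/2 = (k:ℝ) + 1 + 1/2 by push_cast; ring] at h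
    rw [show ((k:ℝ)+1+1/2)*(π/N) = π - (π/N)/2 by
      field_simp; ring] at h
    rw [Real.sin_pi_sub, sub_self, zero_div] at h
    exact (mul_eq_zero.mp h).resolve_left hsinhalf
  -- C1 = -1
  have hC1 : ∑ j ∈ Icc 1 (k+1), Real.cos ((j:ℝ) * (2*π/N)) = -1 := by
    have h := tele (2*π/N) (k+1)
    rw [show (2*π/N)/2 = π/N by ring] at h
    rw [show (((k+1:ℕ)):ℝ) + 1/2 = (k:ℝ) + 1 + 1/2 by push_cast; ring] at h
    rw [show ((k:ℝ)+1+1/2)*(2*π/N) = 2*π - π/N by field_simp; ring] at h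
    rw [Real.sin_sub, Real.sin_two_pi, Real.cos_two_pi] at h
    have h2 : Real.sin (π/N) * ∑ j ∈ Icc 1 (k+1), Real.cos ((j:ℝ) * (2*π/N))
        = Real.sin (π/N) * (-1) := by linear_combination h
    exact mul_left_cancel₀ hsinN h2
  -- C2 = ((-1)^k - 1)/2
  have hC2 : ∑ j ∈ Icc 1 (k+1), Real.cos ((j:ℝ) * ((N+1)*π/N)) = ((-1:ℝ)^k - 1)/2 := by
    have h := tele ((N+1)*π/N) (k+1)
    rw [show ((N+1)*π/N)/2 = π/2 + (π/N)/2 by field_simp] at h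
    rw [Real.sin_add, Real.sin_pi_div_two, Real.cos_pi_div_two, one_mul, zero_mul, add_zero] at h
    rw [show (((k+1:ℕ)):ℝ) + 1/2 = (k:ℝ) + 1 + 1/2 by push_cast; ring] at h
    rw [show ((k:ℝ)+1+1/2)*((N+1)*π/N) = ((k+2:ℕ):ℝ)*π + (π/2 - (π/N)/2) by
      push_cast [hNdef]; field_simp; ring] at h
    rw [Real.sin_add, Real.sin_nat_mul_pi, cos_nat_pi, Real.sin_pi_div_two_sub,
      zero_mul, zero_add, pow_add] at h
    have h2 : Real.cos ((π/N)/2) * ∑ j ∈ Icc 1 (k+1), Real.cos ((j:ℝ) * ((N+1)*π/N))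
        = Real.cos ((π/N)/2) * (((-1:ℝ)^k - 1)/2) := by linear_combination h
    exact mul_left_cancel₀ hcoshalf h2
  -- rewrite alpha^2 sum
  have hA : ∑ j ∈ Finset.Icc 1 (k + 1), Real.sin ((j : ℝ) * π / N) ^ 2 = N/2 := by
    have : ∀ j ∈ Icc 1 (k+1), Real.sin ((j : ℝ) * π / N) ^ 2
        = 1/2 - Real.cos ((j:ℝ) * (2*π/N))/2 := by
      intro j hj
      rw [Real.sin_sq_eq_half_sub]
      congr 2
      ring
    rw [Finset.sum_congr rfl this, Finset.sum_sub_distrib, Finset.sum_const,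
      Nat.card_Icc, ← Finset.sum_div, hC1]
    simp [hNdef]
    ring_nf
  -- rewrite main sum
  have hB : ∑ j ∈ Finset.Icc 1 (k + 1),
        (if Odd j then (3 : ℝ) / 2 else 1 / 2) *
          Real.sin ((j : ℝ) * π / N) ^ 2 / (1 - Real.cos ((j : ℝ) * π / N))
      = (k:ℝ) + 3/2 := by
    have key : ∀ j ∈ Icc 1 (k+1),
        (if Odd j then (3 : ℝ) / 2 else 1 / 2) *
          Real.sin ((j : ℝ) * π / N) ^ 2 / (1 - Real.cos ((j : ℝ) * π / N))
        = (1 + Real.cos ((j:ℝ) * (π/N))) - (-1:ℝ)^j/2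
            - Real.cos ((j:ℝ) * ((N+1)*π/N))/2 := by
      intro j hj
      simp only [Finset.mem_Icc] at hj
      have hθ1 : 0 < (j:ℝ) * π / N := by
        have : (1:ℝ) ≤ (j:ℝ) := by exact_mod_cast hj.1
        positivity
      have hθ2 : (j:ℝ) * π / N < π := by
        rw [div_lt_iff₀ hN0]
        have : (j:ℝ) ≤ (k:ℝ) + 1 := by exact_mod_cast hj.2
        nlinarith [pi_pos]
      have hsin : 0 < Real.sin ((j:ℝ) * π / N) := Real.sin_pos_of_pos_of_lt_pi hθ1 hθ2
      have hpyth := Real.sin_sq_add_cos_sq ((j:ℝ) * π / N)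
      have hcos1 : Real.cos ((j:ℝ) * π / N) < 1 := by nlinarith
      have hne : 1 - Real.cos ((j:ℝ) * π / N) ≠ 0 := by linarith
      have hflip : Real.cos ((j:ℝ) * ((N+1)*π/N)) = (-1:ℝ)^j * Real.cos ((j:ℝ) * (π/N)) := by
        rw [show (j:ℝ) * ((N+1)*π/N) = (j:ℝ)*π + (j:ℝ)*(π/N) by field_simp,
          Real.cos_add, Real.sin_nat_mul_pi, cos_nat_pi, zero_mul, sub_zero]
      have hcoeff : (if Odd j then (3 : ℝ) / 2 else 1 / 2) = 1 - (-1:ℝ)^j/2 := by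
        rcases Nat.even_or_odd j with he | ho
        · rw [if_neg (by simpa using he), he.neg_one_pow]; norm_num
        · rw [if_pos ho, ho.neg_one_pow]; norm_num
      rw [hflip, hcoeff, show (j:ℝ) * (π/N) = (j:ℝ) * π / N by ring]
      field_simp
      linear_combination (2 - (-1:ℝ)^j) * hpyth
    rw [Finset.sum_congr rfl key]
    rw [Finset.sum_sub_distrib, Finset.sum_sub_distrib, Finset.sum_add_distrib,
      Finset.sum_const, Nat.card_Icc, hC0, ← Finset.sum_div, alt_sum,
      ← Finset.sum_div, hC2, pow_succ]
    push_cast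
    ring
  rw [hA, hB]
  rw [hNdef]
  field_simp
  ring
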